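/- arXiv:1405.5187 — 2 statements merged into one kernel-verified Lean document; each statement's English description precedes it below -/
import Mathlib

section
/- Let V and W be k-dimensional linear subspaces of ℝ^{n+1} through the origin. If every point of the unit ball intersected with V lies within distance δ of W (for some δ ∈ (0,1)), then every point of the unit ball intersected with W lies within distance δ of V. -/
set_option maxHeartbeats 2000000


open Metric
open Submodule

section aux

variable {E : Type*} [NormedAddCommGroup E] [InnerProductSpace ℝ E] [FiniteDimensional ℝ E]

/-- Pythagoras for orthogonal projection. -/
lemma aux_pythagoras (S : Submodule ℝ E) (x : E) :
    ‖x‖ ^ 2 = ‖(orthogonalProjection S x : E)‖ ^ 2 + ‖x - orthogonalProjection S x‖ ^ 2 := by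
  have h1 : (↑(orthogonalProjection Sᗮ x) : E) = x - orthogonalProjection S x :=
    starProjection_orthogonal_val x
  have h2 := norm_sq_eq_add_norm_sq_projection x S
  rw [show ‖orthogonalProjection S x‖ = ‖(orthogonalProjection S x : E)‖ from rfl,
    show ‖orthogonalProjection Sᗮ x‖ = ‖(orthogonalProjection Sᗮ x : E)‖ from rfl, h1] at h2
  exact h2

/-- The orthogonal projection minimizes distance, hence is bounded by `infDist`. -/
lemma aux_proj_le_infDist (S : Submodule ℝ E) (x : E) :
    ‖x - orthogonalProjection S x‖ ≤ Metric.infDist x (S : Set E) := by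
  haveI : Nonempty (S : Set E) := ⟨⟨0, S.zero_mem⟩⟩
  rw [Metric.infDist_eq_iInf]
  apply le_ciInf
  intro y
  rw [dist_eq_norm, show ‖x - (orthogonalProjection S x : E)‖ = ⨅ z : S, ‖x - (z : E)‖ from starProjection_minimal x]
  exact ciInf_le ⟨0, fun r ⟨z, hz⟩ => hz ▸ norm_nonneg _⟩ (⟨y, y.2⟩ : S)

/-- Scaling the hypothesis: the projection inequality holds for all of `V`. -/
lemma aux_scale (V W : Submodule ℝ E) (δ : ℝ) (hδ0 : 0 < δ)
    (h : ∀ v ∈ V, ‖v‖ ≤ 1 → Metric.infDist v (W : Set E) ≤ δ) :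
    ∀ v ∈ V, ‖v - orthogonalProjection W v‖ ≤ δ * ‖v‖ := by
  intro v hv
  rcases eq_or_ne v 0 with rfl | hv0
  · simp
  · have hn : (0:ℝ) < ‖v‖ := norm_pos_iff.2 hv0
    set u : E := ‖v‖⁻¹ • v with hu
    have huV : u ∈ V := V.smul_mem _ hv
    have hun : ‖u‖ = 1 := by
      rw [hu, norm_smul, norm_inv, norm_norm, inv_mul_cancel₀ hn.ne']
    have h1 : ‖u - orthogonalProjection W u‖ ≤ δ :=
      (aux_proj_le_infDist W u).trans (h u huV hun.le)
    have h2 : ‖v - orthogonalProjection W v‖ = ‖v‖ * ‖u - orthogonalProjection W u‖ := by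
      rw [hu, map_smul]
      rw [show (↑(‖v‖⁻¹ • orthogonalProjection W v) : E) = ‖v‖⁻¹ • (orthogonalProjection W v : E)
        from rfl, ← smul_sub, norm_smul, norm_inv, norm_norm]
      field_simp
    rw [h2, mul_comm]
    exact mul_le_mul_of_nonneg_right h1 hn.le

end aux

/-- If every point of the unit ball in the `k`-plane `V` lies within distance `δ` of the
`k`-plane `W` (`δ ∈ (0,1)`), then every point of the unit ball in `W` lies within
distance `δ` of `V`. -/
theorem stmt_0 (n k : ℕ) (V W : Submodule ℝ (EuclideanSpace ℝ (Fin (n + 1))))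
    (hV : Module.finrank ℝ V = k) (hW : Module.finrank ℝ W = k)
    (δ : ℝ) (hδ0 : 0 < δ) (hδ1 : δ < 1)
    (h : ∀ v ∈ V, ‖v‖ ≤ 1 → Metric.infDist v (W : Set (EuclideanSpace ℝ (Fin (n + 1)))) ≤ δ) :
    ∀ w ∈ W, ‖w‖ ≤ 1 → Metric.infDist w (V : Set (EuclideanSpace ℝ (Fin (n + 1)))) ≤ δ := by
  set E := EuclideanSpace ℝ (Fin (n + 1))
  have hv' : ∀ v ∈ V, ‖v - orthogonalProjection W v‖ ≤ δ * ‖v‖ := aux_scale V W δ hδ0 h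
  -- the projection map V → W
  set A : V →ₗ[ℝ] W := ((orthogonalProjection W).toLinearMap).comp V.subtype with hA
  have hAapp : ∀ v : V, A v = orthogonalProjection W (v : E) := fun v => rfl
  -- A is injective
  have hAinj : LinearMap.ker A = ⊥ := by
    rw [LinearMap.ker_eq_bot']
    intro v hv0
    have h1 : ‖(v : E) - orthogonalProjection W (v : E)‖ ≤ δ * ‖(v:E)‖ := hv' v v.2
    have h2 : (orthogonalProjection W (v : E) : E) = 0 := by
      rw [← hAapp, hv0]; rfl
    rw [h2, sub_zero] at h1
    have : ‖(v : E)‖ = 0 := by nlinarith [norm_nonneg (v : E)]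
    exact Subtype.ext (by simpa using norm_eq_zero.mp this)
  -- A is surjective
  have hAsurj : LinearMap.range A = ⊤ := by
    apply Submodule.eq_top_of_finrank_eq
    have := LinearMap.finrank_range_add_finrank_ker A
    rw [hAinj, finrank_bot, add_zero, hV] at this
    rw [this, hW]
  intro w hwW hw1
  rcases eq_or_ne w 0 with rfl | hw0
  · rw [show Metric.infDist (0:E) (V : Set E) = 0 from
      Metric.infDist_zero_of_mem V.zero_mem]
    exact hδ0.le
  -- pick v ∈ V with P_W v = w
  obtain ⟨v, hv⟩ := LinearMap.range_eq_top.mp hAsurj ⟨w, hwW⟩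
  have hvw : (orthogonalProjection W (v : E) : E) = w := by rw [← hAapp, hv]
  set p : E := ((orthogonalProjection V w : E)) with hp
  -- Pythagoras for v w.r.t. W, with hv' : ‖v‖² ≤ ‖w‖² + δ²‖v‖²
  have hpyth : ‖(v:E)‖ ^ 2 = ‖w‖ ^ 2 + ‖(v:E) - orthogonalProjection W (v:E)‖ ^ 2 := by
    rw [aux_pythagoras W (v : E), hvw]
  have hd : ‖(v:E) - orthogonalProjection W (v:E)‖ ≤ δ * ‖(v:E)‖ := hv' v v.2
  -- ⟪v, w⟫ = ‖w‖²  and  ⟪v, w⟫ = ⟪v, p⟫ ≤ ‖v‖ ‖p‖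
  have hinner1 : inner ℝ (v : E) w = (‖w‖ : ℝ) ^ 2 := by
    have horth : (v : E) - orthogonalProjection W (v : E) ∈ Wᗮ :=
      sub_starProjection_mem_orthogonal (v : E)
    have h0 : inner ℝ ((v : E) - orthogonalProjection W (v : E)) w = (0:ℝ) := by
      rw [real_inner_comm w ((v : E) - orthogonalProjection W (v : E))]; exact horth w hwW
    rw [inner_sub_left] at h0
    rw [sub_eq_zero.mp h0, hvw, real_inner_self_eq_norm_sq]
  have hinner2 : (inner ℝ (v : E) w : ℝ) = inner ℝ (v : E) p := by
    have horth : w - p ∈ Vᗮ := sub_starProjection_mem_orthogonal w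
    have h0 : inner ℝ (v : E) (w - p) = (0:ℝ) := horth (v : E) v.2
    rw [inner_sub_right] at h0
    exact sub_eq_zero.mp h0
  have hCS : (inner ℝ (v : E) p : ℝ) ≤ ‖(v:E)‖ * ‖p‖ := real_inner_le_norm _ _
  have hkey : ‖w‖ ^ 2 ≤ ‖(v:E)‖ * ‖p‖ := by rw [← hinner1, hinner2]; exact hCS
  -- conclude (1-δ²)‖w‖² ≤ ‖p‖², hence ‖w - p‖² ≤ δ²‖w‖² ≤ δ²
  have hwpos : (0:ℝ) < ‖w‖ := norm_pos_iff.2 hw0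
  have hb : (1 - δ^2) * ‖(v:E)‖^2 ≤ ‖w‖^2 := by nlinarith [norm_nonneg ((v:E) - orthogonalProjection W (v:E)), norm_nonneg (v:E)]
  have h4 : ‖w‖^2 * ‖w‖^2 ≤ (‖(v:E)‖ * ‖p‖) * (‖(v:E)‖ * ‖p‖) :=
    mul_self_le_mul_self (by positivity) hkey
  have hδsq : (0:ℝ) ≤ 1 - δ^2 := by nlinarith
  have h5 : (1 - δ^2) * (‖w‖^2 * ‖w‖^2) ≤ ‖w‖^2 * ‖p‖^2 := by
    nlinarith [sq_nonneg ‖p‖, sq_nonneg ‖w‖, mul_nonneg (norm_nonneg (v:E)) (norm_nonneg p)]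
  have hlow : (1 - δ^2) * ‖w‖^2 ≤ ‖p‖^2 := by
    have hw2 : (0:ℝ) < ‖w‖^2 := by positivity
    nlinarith [h5, hw2]
  have hpyth2 : ‖w‖ ^ 2 = ‖p‖ ^ 2 + ‖w - p‖ ^ 2 := aux_pythagoras V w
  have hwsq : ‖w‖^2 ≤ 1 := by
    calc ‖w‖^2 ≤ 1^2 := pow_le_pow_left₀ (norm_nonneg w) hw1 2
    _ = 1 := one_pow 2
  have h6 : ‖w - p‖^2 ≤ δ^2 := by clear hv hvw hAapp hA h hv'; nlinarith [sq_nonneg δ]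
  have hfinal : ‖w - p‖ ≤ δ := by
    by_contra hcon
    push_neg at hcon
    have hlt : δ^2 < ‖w - p‖^2 := by
      apply pow_lt_pow_left₀ hcon hδ0.le
      norm_num
    linarith only [h6, hlt]
  calc Metric.infDist w (V : Set E) ≤ dist w p :=
        Metric.infDist_le_dist_of_mem (show p ∈ (V : Set E) from (orthogonalProjection V w).2)
    _ = ‖w - p‖ := dist_eq_norm _ _
    _ ≤ δ := hfinal
end

section
/- Let S ⊆ ℝ^{n+1} × ℝ be a connected set which is the graph of a 2-Hölder function with vanishing constant over a subset Ω ⊆ ℝ^{n+1} with H_2(Ω) < ∞. Then S is contained in a time-slice, i.e., there exists t₀ ∈ ℝ with S ⊆ ℝ^{n+1} × {t₀}. -/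
open MeasureTheory Set
open scoped NNReal ENNReal

set_option synthInstance.maxHeartbeats 1000000
set_option maxHeartbeats 1000000

/-- Key measure-theoretic lemma: the image of a set of finite `μH[2]` measure under a
`2`-Hölder map with vanishing constant has `μH[1]` measure zero. -/
lemma image_hausdorff_zero_aux {N : ℕ} (Ω : Set (EuclideanSpace ℝ (Fin (N + 1))))
    (hΩ : μH[2] Ω < ⊤) (u : EuclideanSpace ℝ (Fin (N + 1)) → ℝ)
    (γ : ℝ → ℝ) (hcont : Continuous γ) (hγ0 : γ 0 = 0)
    (hγpos : ∀ ε, 0 ≤ ε → 0 ≤ γ ε)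
    (h : ∀ ε > (0 : ℝ), ∀ x ∈ Ω, ∀ y ∈ Ω, dist x y ≤ ε → |u x - u y| ≤ γ ε * dist x y ^ 2) :
    μH[1] (u '' Ω) = 0 := by
  classical
  -- Step 1: for every ε > 0, μH[1] (u '' Ω) ≤ (γ ε) * μH[2] Ω
  have key : ∀ ε > (0 : ℝ), μH[1] (u '' Ω) ≤ ENNReal.ofReal (γ ε) * μH[2] Ω := by
    intro ε hε
    obtain ⟨x, hx⟩ := TopologicalSpace.exists_dense_seq (EuclideanSpace ℝ (Fin (N + 1)))
    -- partition into measurable pieces of diameter ≤ ε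
    set Q : ℕ → Set (EuclideanSpace ℝ (Fin (N + 1))) := fun k => Metric.ball (x k) (ε / 2) \ ⋃ j < k, Metric.ball (x j) (ε / 2)
      with hQ
    have hQmeas : ∀ k, MeasurableSet (Q k) := fun k =>
      (Metric.isOpen_ball.measurableSet).diff
        (MeasurableSet.biUnion (to_countable _) fun j _ => Metric.isOpen_ball.measurableSet)
    have hQdisj : Pairwise (Function.onFun Disjoint Q) := by
      intro i j hij
      wlog hlt : i < j generalizing i j
      · exact (this hij.symm (hij.lt_or_gt.resolve_left hlt)).symm
      refine Set.disjoint_left.2 fun z hzi hzj => ?_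
      exact hzj.2 (Set.mem_biUnion hlt hzi.1)
    have hQcover : (⋃ k, Q k) = Set.univ := by
      ext z
      simp only [Set.mem_univ, iff_true, Set.mem_iUnion]
      have hex : ∃ k, z ∈ Metric.ball (x k) (ε / 2) := by
        obtain ⟨k, hk⟩ := hx.exists_dist_lt z (by positivity : (0:ℝ) < ε / 2)
        exact ⟨k, by simpa [Metric.mem_ball, dist_comm] using hk⟩
      refine ⟨Nat.find hex, Nat.find_spec hex, fun hmem => ?_⟩
      obtain ⟨j, hj, hjm⟩ := Set.mem_iUnion₂.1 hmem
      exact Nat.find_min hex hj hjm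
    -- each piece: Hölder
    have hhold : ∀ k, HolderOnWith (γ ε).toNNReal 2 u (Ω ∩ Q k) := by
      intro k a ha b hb
      have hdab : dist a b ≤ ε := by
        have h1 : dist a (x k) < ε / 2 := ha.2.1
        have h2 : dist b (x k) < ε / 2 := hb.2.1
        calc dist a b ≤ dist a (x k) + dist (x k) b := dist_triangle _ _ _
          _ ≤ ε := by rw [dist_comm (x k) b]; linarith
      have hub := h ε hε a ha.1 b hb.1 hdab
      have : edist (u a) (u b) ≤ ENNReal.ofReal (γ ε * dist a b ^ 2) := by
        rw [edist_dist]
        exact ENNReal.ofReal_le_ofReal (by rwa [Real.dist_eq])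
      refine this.trans ?_
      rw [ENNReal.ofReal_mul (hγpos ε hε.le)]
      gcongr
      · simp [ENNReal.ofReal]
      · rw [edist_dist]
        have hd0 : (0:ℝ) ≤ dist a b := dist_nonneg
        rw [show ((ENNReal.ofReal (dist a b)) ^ (((2:ℝ≥0)):ℝ)) =
            ENNReal.ofReal (dist a b ^ (((2:ℝ≥0)):ℝ)) from
          ENNReal.ofReal_rpow_of_nonneg hd0 (by norm_num)]
        apply le_of_eq
        congr 1
        rw [show (((2:ℝ≥0)):ℝ) = (2:ℝ) by norm_num, ← Real.rpow_natCast (dist a b) 2]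
        norm_num
    -- sum up
    have himg : u '' Ω ⊆ ⋃ k, u '' (Ω ∩ Q k) := by
      intro t ⟨a, ha, hat⟩
      have : a ∈ ⋃ k, Q k := hQcover ▸ Set.mem_univ a
      obtain ⟨k, hk⟩ := Set.mem_iUnion.1 this
      exact Set.mem_iUnion.2 ⟨k, a, ⟨ha, hk⟩, hat⟩
    calc μH[1] (u '' Ω) ≤ ∑' k, μH[1] (u '' (Ω ∩ Q k)) :=
          (measure_mono himg).trans (measure_iUnion_le _)
      _ ≤ ∑' k, ENNReal.ofReal (γ ε) * μH[2] (Ω ∩ Q k) := by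
          refine ENNReal.tsum_le_tsum fun k => ?_
          have h2 := (hhold k).hausdorffMeasure_image_le (by norm_num : (0:ℝ≥0) < 2)
            (d := 1) (by norm_num)
          have he : ((2:ℝ≥0):ℝ) * 1 = (2:ℝ) := by norm_num
          rw [he, ENNReal.rpow_one] at h2
          exact h2.trans_eq (by rw [ENNReal.ofReal])
      _ = ENNReal.ofReal (γ ε) * ∑' k, μH[2] (Ω ∩ Q k) := ENNReal.tsum_mul_left
      _ ≤ ENNReal.ofReal (γ ε) * μH[2] Ω := by
          gcongr
          -- ∑ μH[2] (Ω ∩ Q k) ≤ μH[2] Ω via measurable hull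
          set T := toMeasurable (μH[2] : Measure (EuclideanSpace ℝ (Fin (N + 1)))) Ω with hT
          have hTm : MeasurableSet T := measurableSet_toMeasurable _ _
          calc ∑' k, μH[2] (Ω ∩ Q k) ≤ ∑' k, μH[2] (T ∩ Q k) := by
                refine ENNReal.tsum_le_tsum fun k => measure_mono ?_
                exact Set.inter_subset_inter_left _ (subset_toMeasurable _ _)
            _ = μH[2] (⋃ k, T ∩ Q k) := by
                rw [measure_iUnion ?_ fun k => hTm.inter (hQmeas k)]
                exact hQdisj.mono fun i j hd => hd.mono inter_subset_right inter_subset_right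
            _ = μH[2] T := by rw [← Set.inter_iUnion, hQcover, Set.inter_univ]
            _ = μH[2] Ω := measure_toMeasurable _
  -- Step 2: conclude by letting ε → 0
  refine le_antisymm ?_ zero_le
  have htend : Filter.Tendsto (fun ε => ENNReal.ofReal (γ ε) * μH[2] Ω)
      (nhdsWithin 0 (Set.Ioi 0)) (nhds 0) := by
    have h1 : Filter.Tendsto (fun ε => ENNReal.ofReal (γ ε)) (nhdsWithin 0 (Set.Ioi 0))
        (nhds 0) := by
      have := (ENNReal.continuous_ofReal.continuousAt (x := γ 0)).comp
        (hcont.continuousAt (x := (0:ℝ)))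
      have h2 : Filter.Tendsto (fun ε => ENNReal.ofReal (γ ε)) (nhds 0)
          (nhds (ENNReal.ofReal (γ 0))) := this
      rw [hγ0, ENNReal.ofReal_zero] at h2
      exact h2.mono_left nhdsWithin_le_nhds
    have := ENNReal.Tendsto.mul_const h1 (Or.inr hΩ.ne)
    simpa using this
  refine ge_of_tendsto htend ?_
  filter_upwards [self_mem_nhdsWithin] with ε hε
  exact key ε hε

/-- A connected set `S ⊆ ℝ^{n+1} × ℝ` which is the graph of a `2`-Hölder function with
vanishing constant over a set `Ω` of finite `2`-dimensional Hausdorff measure is contained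
in a time-slice. -/
theorem stmt_7 (n : ℕ) (Ω : Set (EuclideanSpace ℝ (Fin (n + 1))))
    (hΩ : μH[2] Ω < ⊤) (u : EuclideanSpace ℝ (Fin (n + 1)) → ℝ)
    (γ : ℝ → ℝ) (hcont : Continuous γ) (hmono : Monotone γ) (hγ0 : γ 0 = 0)
    (hγpos : ∀ ε, 0 ≤ ε → 0 ≤ γ ε)
    (h : ∀ ε > (0 : ℝ), ∀ x ∈ Ω, ∀ y ∈ Ω, dist x y ≤ ε → |u x - u y| ≤ γ ε * dist x y ^ 2)
    (S : Set (EuclideanSpace ℝ (Fin (n + 1)) × ℝ))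
    (hS : S = {p | p.1 ∈ Ω ∧ p.2 = u p.1})
    (hconn : IsConnected S) :
    ∃ t₀ : ℝ, S ⊆ {p : EuclideanSpace ℝ (Fin (n + 1)) × ℝ | p.2 = t₀} := by
  have hzero : μH[1] (u '' Ω) = 0 :=
    image_hausdorff_zero_aux Ω hΩ u γ hcont hγ0 hγpos h
  -- the image of S under the second projection is u '' Ω and it is connected
  have himg : Prod.snd '' S = u '' Ω := by
    ext t
    constructor
    · rintro ⟨p, hp, rfl⟩
      rw [hS] at hp
      exact ⟨p.1, hp.1, hp.2.symm⟩
    · rintro ⟨a, ha, rfl⟩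
      exact ⟨(a, u a), by simp [hS, ha], rfl⟩
  have hconn' : IsConnected (u '' Ω) := himg ▸ hconn.image _ continuous_snd.continuousOn
  -- a connected subset of ℝ with zero 1-Hausdorff (= Lebesgue) measure is a singleton
  have hsub : (u '' Ω).Subsingleton := by
    by_contra hns
    rw [Set.not_subsingleton_iff] at hns
    obtain ⟨a, ha, b, hb, hab⟩ := hns
    wlog hlt : a < b generalizing a b
    · exact this b hb a ha hab.symm (hab.lt_or_gt.resolve_left hlt)
    have hIcc : Set.Icc a b ⊆ u '' Ω :=
      hconn'.isPreconnected.ordConnected.out ha hb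
    have : μH[1] (Set.Icc a b) = 0 :=
      le_antisymm (hzero ▸ measure_mono hIcc) zero_le
    rw [MeasureTheory.hausdorffMeasure_real] at this
    rw [Real.volume_Icc] at this
    simp only [ENNReal.ofReal_eq_zero] at this
    linarith
  obtain ⟨p, hp⟩ := hconn.nonempty
  refine ⟨p.2, fun q hq => ?_⟩
  have hp' := hS ▸ hp
  have hq' := hS ▸ hq
  show q.2 = p.2
  rw [hq'.2, hp'.2]
  exact hsub ⟨q.1, hq'.1, rfl⟩ ⟨p.1, hp'.1, rfl⟩
end
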